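/- Let i < k be positive integers. If -1 < α ≤ 0 or α ≥ 1, then (i/k)^α ≤ (Γ(i+α)/Γ(i)) / (Γ(k+α)/Γ(k)) ≤ ((i + (α-1)/2)/(k + (α-1)/2))^α. -/

import Mathlib

open Real Set

private lemma convexH (s b : ℝ) (hs : 0 < s) (hb : b * s < 1) :
    ConvexOn ℝ (Icc 0 b) (fun t => Real.log (1 + t * s) - Real.log (1 - t * s)) := by
  set h : ℝ → ℝ := fun t => Real.log (1 + t * s) - Real.log (1 - t * s) with hh
  set g : ℝ → ℝ := fun t => s / (1 + t * s) + s / (1 - t * s) with hg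
  set V : Set ℝ := {t | 0 < 1 + t * s ∧ 0 < 1 - t * s} with hV
  have hVopen : IsOpen V := by
    have : V = (fun t => 1 + t * s) ⁻¹' Ioi 0 ∩ (fun t => 1 - t * s) ⁻¹' Ioi 0 := rfl
    rw [this]
    exact ((isOpen_Ioi.preimage (by continuity)).inter (isOpen_Ioi.preimage (by continuity)))
  have hIccV : Icc 0 b ⊆ V := by
    intro t ht
    constructor
    · nlinarith [ht.1]
    · nlinarith [mul_le_mul_of_nonneg_right ht.2 hs.le]
  have hderivh : ∀ t ∈ V, HasDerivAt h (g t) t := by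
    intro t ht
    have h1 : HasDerivAt (fun t : ℝ => 1 + t * s) s t := by
      simpa using ((hasDerivAt_id t).mul_const s).const_add 1
    have h2 : HasDerivAt (fun t : ℝ => 1 - t * s) (-s) t := by
      simpa using ((hasDerivAt_id t).mul_const s).const_sub 1
    have := (h1.log ht.1.ne').sub (h2.log ht.2.ne')
    refine this.congr_deriv ?_
    simp only [hg]
    ring
  have hderivh_eq : ∀ t ∈ V, deriv h t = g t := fun t ht => (hderivh t ht).deriv
  have hderivg : ∀ t ∈ V, HasDerivAt g (s^2 / (1 - t * s)^2 - s^2 / (1 + t * s)^2) t := by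
    intro t ht
    have h1 : HasDerivAt (fun t : ℝ => 1 + t * s) s t := by
      simpa using ((hasDerivAt_id t).mul_const s).const_add 1
    have h2 : HasDerivAt (fun t : ℝ => 1 - t * s) (-s) t := by
      simpa using ((hasDerivAt_id t).mul_const s).const_sub 1
    have := ((hasDerivAt_const t s).div h1 ht.1.ne').add
      ((hasDerivAt_const t s).div h2 ht.2.ne')
    refine this.congr_deriv ?_
    field_simp
    ring
  have hIoo : interior (Icc (0:ℝ) b) = Ioo 0 b := interior_Icc
  have hIooV : Ioo (0:ℝ) b ⊆ V := fun t ht => hIccV (Ioo_subset_Icc_self ht)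
  apply convexOn_of_deriv2_nonneg (convex_Icc _ _)
  · -- continuity
    apply ContinuousOn.sub
    · apply ContinuousOn.log (by fun_prop)
      intro t ht; exact (hIccV ht).1.ne'
    · apply ContinuousOn.log (by fun_prop)
      intro t ht; exact (hIccV ht).2.ne'
  · rw [hIoo]
    intro t ht
    exact ((hderivh t (hIooV ht)).differentiableAt).differentiableWithinAt
  · rw [hIoo]
    intro t ht
    have hev : deriv h =ᶠ[nhds t] g :=
      Filter.eventuallyEq_of_mem (hVopen.mem_nhds (hIooV ht)) hderivh_eq
    have : DifferentiableAt ℝ g t := (hderivg t (hIooV ht)).differentiableAt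
    exact (hev.differentiableAt_iff.mpr this).differentiableWithinAt
  · rw [hIoo]
    intro t ht
    have hev : deriv h =ᶠ[nhds t] g :=
      Filter.eventuallyEq_of_mem (hVopen.mem_nhds (hIooV ht)) hderivh_eq
    have h2 : deriv^[2] h t = deriv g t := by
      simp only [Function.iterate_succ, Function.iterate_zero, Function.comp_apply, id]
      exact hev.deriv_eq
    rw [h2, (hderivg t (hIooV ht)).deriv]
    have htV := hIooV ht
    have h1 : 0 < 1 - t * s := htV.2
    have h3 : 1 - t * s ≤ 1 + t * s := by nlinarith [ht.1, hs]
    have : s^2 / (1 + t * s)^2 ≤ s^2 / (1 - t * s)^2 := by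
      apply div_le_div_of_nonneg_left (sq_nonneg s) (by positivity)
      nlinarith
    linarith

private lemma keyIneq (s α : ℝ) (hs0 : 0 < s) (hs1 : s < 1)
    (hα : (-1 < α ∧ α ≤ 0) ∨ 1 ≤ α) (hαs : α * s < 1) :
    α * (Real.log (1 + s) - Real.log (1 - s)) ≤
      Real.log (1 + α * s) - Real.log (1 - α * s) := by
  set h : ℝ → ℝ := fun t => Real.log (1 + t * s) - Real.log (1 - t * s) with hh
  have h0 : h 0 = 0 := by simp [hh]
  suffices key : α * h 1 ≤ h α by simpa [hh] using key
  rcases hα with ⟨hα1, hα2⟩ | hα1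
  · -- -1 < α ≤ 0 : use convexity on [0,1] with β = -α
    set β : ℝ := -α with hβ
    have hβ0 : 0 ≤ β := by linarith
    have hβ1 : β < 1 := by linarith
    have hconv := convexH s 1 hs0 (by linarith)
    have hkey : h β ≤ β * h 1 := by
      have hm1 : (0:ℝ) ∈ Icc (0:ℝ) 1 := ⟨le_refl 0, zero_le_one⟩
      have hm2 : (1:ℝ) ∈ Icc (0:ℝ) 1 := ⟨zero_le_one, le_refl 1⟩
      have ha' : (0:ℝ) ≤ 1 - β := by linarith
      have hab : (1 - β) + β = 1 := by ring
      have := hconv.2 hm1 hm2 ha' hβ0 hab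
      have e1 : (1 - β) • (0:ℝ) + β • (1:ℝ) = β := by simp
      rw [e1] at this
      simp only [hh]
      simp only [zero_mul, one_mul, smul_eq_mul, mul_zero, add_zero, sub_zero, Real.log_one,
        mul_one] at this ⊢
      linarith
    have heq : h α = -h β := by simp only [hh, hβ]; ring_nf
    rw [heq]
    have : α * h 1 = -(β * h 1) := by rw [hβ]; ring
    rw [this]
    linarith
  · -- 1 ≤ α
    have hα0 : 0 < α := by linarith
    have hconv := convexH s α hs0 hαs
    have hkey : h 1 ≤ (1/α) * h α := by
      have hm1 : (0:ℝ) ∈ Icc (0:ℝ) α := ⟨le_refl 0, hα0.le⟩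
      have hm2 : α ∈ Icc (0:ℝ) α := ⟨hα0.le, le_refl α⟩
      have ha : (0:ℝ) ≤ 1 - 1/α := by
        rw [sub_nonneg]; exact div_le_one_of_le₀ hα1 hα0.le
      have hb' : (0:ℝ) ≤ 1/α := by positivity
      have hab : (1 - 1/α) + 1/α = 1 := by ring
      have := hconv.2 hm1 hm2 ha hb' hab
      have e1 : (1 - 1/α) • (0:ℝ) + (1/α) • α = 1 := by
        simp only [smul_eq_mul]; field_simp; ring
      rw [e1] at this
      simp only [hh]
      simp only [zero_mul, one_mul, smul_eq_mul, mul_zero, add_zero, sub_zero, Real.log_one,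
        mul_one] at this ⊢
      linarith
    calc α * h 1 ≤ α * ((1/α) * h α) := mul_le_mul_of_nonneg_left hkey hα0.le
      _ = h α := by field_simp

private lemma pointwise_lower (α : ℝ) (hα : (-1 < α ∧ α ≤ 0) ∨ 1 ≤ α)
    (a : ℝ) (ha : 1 ≤ a) : (a / (a + 1)) ^ α ≤ a / (a + α) := by
  have ha0 : 0 < a := by linarith
  have hαm : -1 < α := by rcases hα with ⟨h, _⟩ | h <;> linarith
  have haα : 0 < a + α := by linarith
  have e : a / (a + 1) = (1 + 1/a)⁻¹ := by
    rw [inv_eq_one_div]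
    rw [div_eq_div_iff (by positivity) (by positivity)]
    field_simp
  have hpos : (0:ℝ) < 1 + 1/a := by positivity
  rcases hα with ⟨hα1, hα2⟩ | hα1
  · -- -1 < α ≤ 0
    have hb := rpow_one_add_le_one_add_mul_self (s := 1/a)
      (by have : (0:ℝ) < 1/a := by positivity
          linarith) (p := -α) (by linarith) (by linarith)
    have e2 : (a / (a + 1)) ^ α = (1 + 1/a) ^ (-α) := by
      rw [e, Real.inv_rpow hpos.le, ← Real.rpow_neg hpos.le]
    rw [e2]
    refine hb.trans ?_
    rw [le_div_iff₀ haα]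
    have expand : (1 + -α * (1/a)) * (a + α) = a - α^2 * (1/a) := by
      field_simp; ring
    rw [expand]
    have : 0 ≤ α^2 * (1/a) := by positivity
    linarith
  · -- 1 ≤ α
    have hb := one_add_mul_self_le_rpow_one_add (s := 1/a)
      (by have : (0:ℝ) < 1/a := by positivity
          linarith) hα1
    have e2 : (a / (a + 1)) ^ α = ((1 + 1/a) ^ α)⁻¹ := by
      rw [e, Real.inv_rpow hpos.le]
    rw [e2]
    have h1 : 0 < 1 + α * (1/a) := by positivity
    have h2 : ((1 + 1/a) ^ α)⁻¹ ≤ (1 + α * (1/a))⁻¹ := by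
      apply inv_anti₀ h1 hb
    refine h2.trans ?_
    rw [inv_eq_one_div, div_le_div_iff₀ (by positivity) haα]
    have : 1 * (a + α) ≤ (1 + α * (1/a)) * a := by
      field_simp
      exact le_rfl
    linarith [this]

private lemma pointwise_upper (α : ℝ) (hα : (-1 < α ∧ α ≤ 0) ∨ 1 ≤ α)
    (a : ℝ) (ha : 1 ≤ a) :
    a / (a + α) ≤ ((a + (α - 1) / 2) / ((a + 1) + (α - 1) / 2)) ^ α := by
  have hαm : -1 < α := by rcases hα with ⟨h, _⟩ | h <;> linarith
  have hc : (0:ℝ) < 2*a + α := by linarith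
  have hc1 : (1:ℝ) < 2*a + α := by linarith
  set s : ℝ := 1/(2*a + α) with hs_def
  have hs0 : 0 < s := by positivity
  have hs1 : s < 1 := by
    rw [hs_def, div_lt_one hc]; linarith
  have hαs : α * s < 1 := by
    rcases hα with ⟨_, h2⟩ | h1
    · have : α * s ≤ 0 := mul_nonpos_of_nonpos_of_nonneg h2 hs0.le
      linarith
    · rw [hs_def, mul_one_div, div_lt_one hc]; linarith
  have hαs2 : -1 < α * s := by
    rcases hα with ⟨h1, h2⟩ | h1
    · nlinarith [mul_pos (by linarith : (0:ℝ) < 1 + α) hs0]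
    · have : 0 < α * s := mul_pos (by linarith) hs0
      linarith
  have hkey := keyIneq s α hs0 hs1 hα hαs
  -- rewrite the two ratios
  have haα : (0:ℝ) < a + α := by linarith
  have e1 : a / (a + α) = (1 - α * s) / (1 + α * s) := by
    rw [hs_def]
    rw [div_eq_div_iff (ne_of_gt haα) (by nlinarith [hαs2] : (1:ℝ) + α * (1/(2*a+α)) ≠ 0)]
    field_simp [(ne_of_gt (by linarith) : a * 2 + α ≠ 0)]
    ring
  have e2 : (a + (α - 1) / 2) / ((a + 1) + (α - 1) / 2) = (1 - s) / (1 + s) := by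
    rw [hs_def]
    rw [div_eq_div_iff (by intro h; nlinarith [h] : (a + 1) + (α - 1)/2 ≠ 0)
      (by intro h; nlinarith [hs0, hs_def ▸ h] : (1:ℝ) + 1/(2*a+α) ≠ 0)]
    field_simp [(ne_of_gt (by linarith) : a * 2 + α ≠ 0)]
    ring
  have hX : 0 < (1 - α * s) / (1 + α * s) := by
    apply div_pos <;> linarith
  have hY : 0 < (1 - s) / (1 + s) := by
    apply div_pos <;> linarith
  rw [e1, e2, Real.le_rpow_iff_log_le hX hY]
  rw [Real.log_div (by linarith) (by linarith), Real.log_div (by linarith) (by linarith)]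
  nlinarith [hkey]

theorem gamma_ratio_two_sided (α : ℝ) (hα : (-1 < α ∧ α ≤ 0) ∨ 1 ≤ α)
    (i k : ℕ) (hi : 0 < i) (hik : i < k) :
    ((i : ℝ) / k) ^ α ≤
        (Real.Gamma (i + α) / Real.Gamma i) / (Real.Gamma (k + α) / Real.Gamma k) ∧
    (Real.Gamma (i + α) / Real.Gamma i) / (Real.Gamma (k + α) / Real.Gamma k) ≤
        ((i + (α - 1) / 2) / (k + (α - 1) / 2)) ^ α := by
  have hαm : -1 < α := by rcases hα with ⟨h, _⟩ | h <;> linarith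
  have hi1 : (1:ℝ) ≤ (i:ℝ) := by exact_mod_cast hi
  have hipos : (0:ℝ) < (i:ℝ) := by linarith
  have hiα : (0:ℝ) < (i:ℝ) + α := by linarith
  have hGi : 0 < Real.Gamma (i:ℝ) := Real.Gamma_pos_of_pos hipos
  have hGiα : 0 < Real.Gamma ((i:ℝ) + α) := Real.Gamma_pos_of_pos hiα
  have key : ∀ n : ℕ, i ≤ n →
      (((i:ℝ) / n) ^ α ≤
        (Real.Gamma (i + α) / Real.Gamma i) / (Real.Gamma (n + α) / Real.Gamma n) ∧
      (Real.Gamma (i + α) / Real.Gamma i) / (Real.Gamma (n + α) / Real.Gamma n) ≤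
        (((i:ℝ) + (α - 1) / 2) / ((n:ℝ) + (α - 1) / 2)) ^ α) := by
    intro n hn
    induction n, hn using Nat.le_induction with
    | base =>
      have e1 : (i:ℝ) / (i:ℝ) = 1 := div_self (ne_of_gt hipos)
      have e2 : Real.Gamma ((i:ℝ) + α) / Real.Gamma (i:ℝ) /
          (Real.Gamma ((i:ℝ) + α) / Real.Gamma (i:ℝ)) = 1 :=
        div_self (ne_of_gt (div_pos hGiα hGi))
      have e3 : ((i:ℝ) + (α - 1) / 2) / ((i:ℝ) + (α - 1) / 2) = 1 :=
        div_self (by intro h; nlinarith [h])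
      rw [e1, e2, e3, Real.one_rpow]
      exact ⟨le_refl 1, le_refl 1⟩
    | succ n hn ih =>
      have hn1 : (1:ℝ) ≤ (n:ℝ) := by exact_mod_cast hi.trans_le hn
      have hnpos : (0:ℝ) < (n:ℝ) := by linarith
      have hnα : (0:ℝ) < (n:ℝ) + α := by linarith
      have hGn : 0 < Real.Gamma (n:ℝ) := Real.Gamma_pos_of_pos hnpos
      have hGnα : 0 < Real.Gamma ((n:ℝ) + α) := Real.Gamma_pos_of_pos hnα
      have hcast : ((n + 1 : ℕ) : ℝ) = (n:ℝ) + 1 := by push_cast; ring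
      rw [hcast]
      have hrec1 : Real.Gamma ((n:ℝ) + 1) = (n:ℝ) * Real.Gamma (n:ℝ) :=
        Real.Gamma_add_one (ne_of_gt hnpos)
      have hrec2 : Real.Gamma ((n:ℝ) + 1 + α) = ((n:ℝ) + α) * Real.Gamma ((n:ℝ) + α) := by
        rw [show (n:ℝ) + 1 + α = ((n:ℝ) + α) + 1 by ring]
        exact Real.Gamma_add_one (ne_of_gt hnα)
      have hR : Real.Gamma ((i:ℝ) + α) / Real.Gamma (i:ℝ) /
            (Real.Gamma ((n:ℝ) + 1 + α) / Real.Gamma ((n:ℝ) + 1)) =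
          (Real.Gamma ((i:ℝ) + α) / Real.Gamma (i:ℝ) /
            (Real.Gamma ((n:ℝ) + α) / Real.Gamma (n:ℝ))) * ((n:ℝ) / ((n:ℝ) + α)) := by
        rw [hrec1, hrec2]
        field_simp
      rw [hR]
      have hRpos : 0 < Real.Gamma ((i:ℝ) + α) / Real.Gamma (i:ℝ) /
          (Real.Gamma ((n:ℝ) + α) / Real.Gamma (n:ℝ)) :=
        div_pos (div_pos hGiα hGi) (div_pos hGnα hGn)
      have hfrac : 0 < (n:ℝ) / ((n:ℝ) + α) := div_pos hnpos hnα
      constructor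
      · -- lower bound
        have e4 : (i:ℝ) / ((n:ℝ) + 1) = ((i:ℝ) / n) * ((n:ℝ) / ((n:ℝ) + 1)) := by
          field_simp
        rw [e4, Real.mul_rpow (by positivity) (by positivity)]
        exact mul_le_mul ih.1 (pointwise_lower α hα (n:ℝ) hn1)
          (Real.rpow_nonneg (by positivity) _) hRpos.le
      · -- upper bound
        have hcpos : (0:ℝ) < (n:ℝ) + (α - 1) / 2 := by linarith
        have hcpos1 : (0:ℝ) < ((n:ℝ) + 1) + (α - 1) / 2 := by linarith
        have hcposi : (0:ℝ) < (i:ℝ) + (α - 1) / 2 := by linarith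
        have e5 : ((i:ℝ) + (α - 1) / 2) / (((n:ℝ) + 1) + (α - 1) / 2) =
            (((i:ℝ) + (α - 1) / 2) / ((n:ℝ) + (α - 1) / 2)) *
              (((n:ℝ) + (α - 1) / 2) / (((n:ℝ) + 1) + (α - 1) / 2)) := by
          rw [div_mul_div_comm]
          rw [mul_comm ((i:ℝ) + (α - 1) / 2) _, mul_comm ((n:ℝ) + (α - 1) / 2) _]
          rw [← div_div]
          rw [mul_div_assoc, div_self (ne_of_gt hcpos)]
          ring
        rw [e5, Real.mul_rpow (by positivity) (by positivity)]
        exact mul_le_mul ih.2 (pointwise_upper α hα (n:ℝ) hn1) hfrac.le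
          (Real.rpow_nonneg (by positivity) _)
  exact key k hik.le
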